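/- Let f(x_1,...,x_m) = Σ_{1≤i<j≤m} x_i x_j + Σ_{i=1}^m c_i x_i + c_0 and g(x) = f(x) + Σ_{i=1}^m x_i + c' be Boolean functions with c_i, c', c_0 ∈ Z_2. Then the pair (f,g) is a binary Type-II complementary array pair of size 2×2×···×2, i.e., their generating functions satisfy (F(z))^2 + (G(z))^2 = 2·∏_{k=1}^m (1+z_k^2). -/

import Mathlib

open MvPolynomial Finset

/-- Generating function of a Boolean function `f : {0,1}^m → Z_2`:
`F(z) = Σ_{x∈{0,1}^m} (-1)^{f(x)} z_1^{x_1} ⋯ z_m^{x_m}` over `ℤ`. -/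
noncomputable def genFun {m : ℕ} (f : (Fin m → ZMod 2) → ZMod 2) :
    MvPolynomial (Fin m) ℤ :=
  ∑ x : Fin m → ZMod 2,
    MvPolynomial.C ((-1 : ℤ) ^ (f x).val) * ∏ i, MvPolynomial.X i ^ (x i).val

/-- `(f,g)` is a binary Type-II complementary array pair of size `2×⋯×2`. -/
noncomputable def IsTypeIIPair {m : ℕ} (f g : (Fin m → ZMod 2) → ZMod 2) : Prop :=
  genFun f ^ 2 + genFun g ^ 2 = 2 * ∏ k, (1 + MvPolynomial.X k ^ 2)

section Aux
open Complex

lemma quad_count {m : ℕ} (a : Fin m → ℕ) (hsq : ∀ k, a k * a k = a k) :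
    2 * (∑ p ∈ univ.filter (fun p : Fin m × Fin m => p.1 < p.2),
        a p.1 * a p.2) + (∑ k, a k)
      = (∑ k, a k) * (∑ k, a k) := by
  classical
  have h1 : (∑ k, a k) * (∑ k, a k)
      = ∑ p : Fin m × Fin m, a p.1 * a p.2 := by
    rw [Fintype.sum_mul_sum, ← Finset.sum_product']
    simp
  have h2 : (∑ p : Fin m × Fin m, a p.1 * a p.2)
      = (∑ p ∈ univ.filter (fun p : Fin m × Fin m => p.1 < p.2), a p.1 * a p.2)
      + ((∑ p ∈ univ.filter (fun p : Fin m × Fin m => p.2 < p.1), a p.1 * a p.2)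
      + (∑ p ∈ univ.filter (fun p : Fin m × Fin m => p.1 = p.2), a p.1 * a p.2)) := by
    rw [← Finset.sum_filter_add_sum_filter_not univ (fun p : Fin m × Fin m => p.1 < p.2)]
    congr 1
    rw [← Finset.sum_filter_add_sum_filter_not
      (univ.filter (fun p : Fin m × Fin m => ¬ p.1 < p.2))
      (fun p : Fin m × Fin m => p.2 < p.1), Finset.filter_filter, Finset.filter_filter]
    congr 1
    · apply Finset.sum_congr _ (fun _ _ => rfl)
      apply Finset.filter_congr
      intro p _
      simp only [not_lt, and_iff_right_iff_imp]
      exact le_of_lt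
    · apply Finset.sum_congr _ (fun _ _ => rfl)
      apply Finset.filter_congr
      intro p _
      simp only [not_lt]
      constructor
      · rintro ⟨h1, h2⟩; exact le_antisymm h2 h1
      · intro h; exact ⟨le_of_eq h.symm, le_of_eq h⟩
  have h3 : (∑ p ∈ univ.filter (fun p : Fin m × Fin m => p.2 < p.1), a p.1 * a p.2)
      = (∑ p ∈ univ.filter (fun p : Fin m × Fin m => p.1 < p.2), a p.1 * a p.2) := by
    apply Finset.sum_nbij' (fun p => Prod.swap p) (fun p => Prod.swap p) <;>
      simp [mul_comm]
  have h4 : (∑ p ∈ univ.filter (fun p : Fin m × Fin m => p.1 = p.2), a p.1 * a p.2)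
      = ∑ k, a k := by
    apply Finset.sum_nbij' (fun p => p.1) (fun k => (k, k)) <;>
      simp +contextual [Prod.ext_iff, hsq]
  omega

lemma quad_eq {m : ℕ} (x : Fin m → ZMod 2) :
    (∑ p ∈ univ.filter (fun p : Fin m × Fin m => p.1 < p.2), x p.1 * x p.2)
      = ((∑ j ∈ range (∑ k, (x k).val), j : ℕ) : ZMod 2) := by
  classical
  set a : Fin m → ℕ := fun k => (x k).val with ha
  have hsq : ∀ k, a k * a k = a k := by
    intro k
    have : a k ≤ 1 := Nat.lt_succ_iff.mp ((x k).val_lt)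
    interval_cases h : a k <;> simp
  have h1 := quad_count a hsq
  have h2 := Finset.sum_range_id_mul_two (∑ k, a k)
  have h2' : (∑ j ∈ range (∑ k, a k), j) * 2 = (∑ k, a k) * (∑ k, a k) - (∑ k, a k) := by
    rw [h2, Nat.mul_sub_one, Nat.mul_comm]
  have h3 : (∑ k, a k) ≤ (∑ k, a k) * (∑ k, a k) := by
    rcases Nat.eq_zero_or_pos (∑ k, a k) with h | h
    · simp [h]
    · exact Nat.le_mul_of_pos_left _ h
  have hS : (∑ p ∈ univ.filter (fun p : Fin m × Fin m => p.1 < p.2), a p.1 * a p.2)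
      = ∑ j ∈ range (∑ k, a k), j := by omega
  have hx : ∀ k, ((x k).val : ZMod 2) = x k := fun k => by
    rw [ZMod.natCast_val, ZMod.cast_id]
  rw [← hS, Nat.cast_sum]
  apply Finset.sum_congr rfl
  intro p _
  rw [Nat.cast_mul, hx, hx]

-- character lemma
lemma chi_add (a b : ZMod 2) : (-1:ℂ)^(a+b).val = (-1)^a.val * (-1)^b.val := by
  rw [ZMod.val_add, ← neg_one_pow_eq_pow_mod_two, pow_add]

lemma chi_sum {α : Type*} (s : Finset α) (h : α → ZMod 2) :
    (-1:ℂ)^((∑ a ∈ s, h a).val) = ∏ a ∈ s, (-1:ℂ)^((h a).val) := by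
  induction s using Finset.cons_induction with
  | empty => simp
  | cons a s ha ih => rw [Finset.sum_cons, Finset.prod_cons, chi_add, ih]

-- core Gaussian lemma
lemma core1 (w : ℕ) :
    (-1:ℂ)^(∑ j ∈ range w, j) * (1 + I * (-1)^w) = (1 + I) * (-I)^w := by
  induction w with
  | zero => simp
  | succ w ih =>
    have h1 : (-1:ℂ)^w * (-1)^w = 1 := by
      rw [← pow_add, ← two_mul, pow_mul]; norm_num
    rw [Finset.sum_range_succ, pow_add, pow_succ, pow_succ]
    linear_combination (-I) * ih + ((-1:ℂ)^(∑ j ∈ range w, j) * (-1)^w) * Complex.I_sq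
      - ((-1:ℂ)^(∑ j ∈ range w, j) * I) * h1

lemma core2 (w : ℕ) :
    (-1:ℂ)^(∑ j ∈ range w, j) * (1 - I * (-1)^w) = (1 - I) * I^w := by
  have h := congrArg (starRingEnd ℂ) (core1 w)
  simpa [map_sum, map_pow, map_mul, map_add, sub_eq_add_neg] using h

lemma core (ε : ℂ) (hε : ε = 1 ∨ ε = -1) (w : ℕ) :
    (-1:ℂ)^(∑ j ∈ range w, j) * (1 + I * ε * (-1)^w) = (1 + I * ε) * (-(I * ε))^w := by
  rcases hε with h | h <;> subst h
  · simpa using core1 w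
  · have := core2 w
    have e1 : (1:ℂ) + I * -1 = 1 - I := by ring
    have e2 : (-(I * (-1:ℂ))) = I := by ring
    rw [e1, e2]
    convert this using 2
    ring

lemma chi_natCast (N : ℕ) : (-1:ℂ)^(((N : ZMod 2)).val) = (-1)^N := by
  rw [ZMod.val_natCast]
  exact (neg_one_pow_eq_pow_mod_two N).symm

lemma chi_mul_val (a b : ZMod 2) : (-1:ℂ)^((a*b).val) = ((-1:ℂ)^(a.val))^(b.val) := by
  rw [ZMod.val_mul, ← neg_one_pow_eq_pow_mod_two, pow_mul]

lemma scalar_form {m : ℕ} (c : Fin m → ZMod 2) (c0 c' : ZMod 2)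
    (f g : (Fin m → ZMod 2) → ZMod 2)
    (hf : ∀ x, f x = (∑ p ∈ Finset.univ.filter (fun p : Fin m × Fin m => p.1 < p.2),
        x p.1 * x p.2) + (∑ i, c i * x i) + c0)
    (hg : ∀ x, g x = f x + (∑ i, x i) + c')
    (σ : ℂ) (hσ : σ = 1 ∨ σ = -1) (x : Fin m → ZMod 2) :
    (-1:ℂ)^((f x).val) + I * σ * (-1)^((g x).val)
      = ((-1)^(c0.val) * (1 + I * (σ * (-1)^(c'.val)))) *
        ∏ k, ((-1:ℂ)^((c k).val) * (-(I * (σ * (-1)^(c'.val)))))^((x k).val) := by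
  set δ : ℂ := (-1:ℂ)^(c'.val) with hδdef
  set w : ℕ := ∑ k, (x k).val with hw
  set L : ℂ := ∏ k, ((-1:ℂ)^((c k).val))^((x k).val) with hL
  have hδ : δ = 1 ∨ δ = -1 := by
    rcases Nat.even_or_odd c'.val with h | h
    · left; exact h.neg_one_pow
    · right; exact h.neg_one_pow
  have hσδ : σ * δ = 1 ∨ σ * δ = -1 := by
    rcases hσ with h | h <;> rcases hδ with h' | h' <;> rw [h, h'] <;> norm_num
  have hfv : (-1:ℂ)^((f x).val) = (-1)^(∑ j ∈ range w, j) * L * (-1)^(c0.val) := by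
    rw [hf x, chi_add, chi_add, quad_eq, chi_natCast, chi_sum]
    congr 1
    congr 1
    exact Finset.prod_congr rfl fun k _ => chi_mul_val (c k) (x k)
  have hgv : (-1:ℂ)^((g x).val)
      = (-1:ℂ)^((f x).val) * (-1)^w * δ := by
    rw [hg x, chi_add, chi_add, chi_sum, hδdef]
    congr 2
    rw [hw]
    rw [← Finset.prod_pow_eq_pow_sum]
  have hcore := core (σ * δ) hσδ w
  have hprod : ∏ k, ((-1:ℂ)^((c k).val) * (-(I * (σ * δ))))^((x k).val)
      = L * (-(I * (σ * δ)))^w := by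
    simp only [mul_pow, Finset.prod_mul_distrib, hL, hw]
    rw [Finset.prod_pow_eq_pow_sum]
  rw [hgv, hfv, hprod]
  linear_combination (L * (-1:ℂ)^(c0.val)) * hcore

lemma expand_prod {S : Type*} [CommSemiring S] {m : ℕ} (t : Fin m → S) :
    ∑ x : Fin m → ZMod 2, ∏ k, t k ^ (x k).val = ∏ k, (1 + t k) := by
  have h : ∀ k, (1 + t k) = ∑ b : ZMod 2, t k ^ (b.val) := by
    intro k
    have hu : (Finset.univ : Finset (ZMod 2)) = {0, 1} := by decide
    rw [hu, Finset.sum_insert (by decide), Finset.sum_singleton]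
    norm_num [show (0:ZMod 2).val = 0 from rfl, show (1:ZMod 2).val = 1 from rfl]
  simp_rw [h]
  exact (Fintype.prod_sum fun k b => t k ^ (b : ZMod 2).val).symm

open MvPolynomial in
lemma map_genFun {m : ℕ} (f : (Fin m → ZMod 2) → ZMod 2) :
    MvPolynomial.map (Int.castRingHom ℂ) (genFun f)
      = ∑ x : Fin m → ZMod 2,
          C ((-1 : ℂ) ^ (f x).val) * ∏ i, X i ^ (x i).val := by
  rw [genFun, map_sum]
  refine Finset.sum_congr rfl fun x _ => ?_
  rw [RingHom.map_mul, MvPolynomial.map_C, map_prod]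
  congr 1
  · simp
  · exact Finset.prod_congr rfl fun k _ => by rw [RingHom.map_pow, MvPolynomial.map_X]

open MvPolynomial in
lemma factor_form {m : ℕ} (c : Fin m → ZMod 2) (c0 c' : ZMod 2)
    (f g : (Fin m → ZMod 2) → ZMod 2)
    (hf : ∀ x, f x = (∑ p ∈ Finset.univ.filter (fun p : Fin m × Fin m => p.1 < p.2),
        x p.1 * x p.2) + (∑ i, c i * x i) + c0)
    (hg : ∀ x, g x = f x + (∑ i, x i) + c')
    (σ : ℂ) (hσ : σ = 1 ∨ σ = -1) :
    MvPolynomial.map (Int.castRingHom ℂ) (genFun f)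
      + C (I * σ) * MvPolynomial.map (Int.castRingHom ℂ) (genFun g)
      = C ((-1:ℂ)^(c0.val) * (1 + I * (σ * (-1)^(c'.val)))) *
        ∏ k, (1 + C ((-1:ℂ)^((c k).val) * (-(I * (σ * (-1)^(c'.val))))) * X k) := by
  rw [map_genFun, map_genFun, Finset.mul_sum, ← Finset.sum_add_distrib]
  have step1 : ∀ x : Fin m → ZMod 2,
      C ((-1 : ℂ) ^ (f x).val) * ∏ i, (X i : MvPolynomial (Fin m) ℂ) ^ (x i).val
        + C (I * σ) * (C ((-1 : ℂ) ^ (g x).val) * ∏ i, X i ^ (x i).val)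
      = C ((-1:ℂ)^(c0.val) * (1 + I * (σ * (-1)^(c'.val)))) *
          ∏ k, (C ((-1:ℂ)^((c k).val) * (-(I * (σ * (-1)^(c'.val))))) * X k) ^ ((x k).val) := by
    intro x
    have hs := scalar_form c c0 c' f g hf hg σ hσ x
    calc C ((-1 : ℂ) ^ (f x).val) * ∏ i, (X i : MvPolynomial (Fin m) ℂ) ^ (x i).val
        + C (I * σ) * (C ((-1 : ℂ) ^ (g x).val) * ∏ i, X i ^ (x i).val)
        = C ((-1:ℂ)^((f x).val) + I * σ * (-1)^((g x).val)) * ∏ i, X i ^ (x i).val := by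
          simp only [C_add, C_mul]; ring
      _ = C (((-1:ℂ)^(c0.val) * (1 + I * (σ * (-1)^(c'.val)))) *
            ∏ k, ((-1:ℂ)^((c k).val) * (-(I * (σ * (-1)^(c'.val)))))^((x k).val))
            * ∏ i, X i ^ (x i).val := by rw [hs]
      _ = _ := by
          rw [C_mul, mul_assoc]
          congr 1
          rw [map_prod]
          simp only [mul_pow, Finset.prod_mul_distrib]
          congr 1
          exact Finset.prod_congr rfl fun k _ => by rw [← mul_pow, C_pow]
  rw [Finset.sum_congr rfl fun x _ => step1 x, ← Finset.mul_sum, expand_prod]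

open MvPolynomial in
lemma per_factor {m : ℕ} (a : ℂ) (ha : a^2 = -1) (k : Fin m) :
    (1 + C a * X k) * (1 + C (-a) * X k)
      = 1 + (X k : MvPolynomial (Fin m) ℂ) ^ 2 := by
  have h2 : (C a : MvPolynomial (Fin m) ℂ)^2 = -1 := by
    rw [← C_pow, ha]; simp
  simp only [map_neg]
  linear_combination (-((X k : MvPolynomial (Fin m) ℂ)^2)) * h2

lemma sq_neg_one_pow (n : ℕ) : ((-1:ℂ)^n) * ((-1:ℂ)^n) = 1 := by
  rw [← pow_add, ← two_mul, pow_mul]; norm_num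


end Aux

open Complex in
theorem typeII_of_standard_form (m : ℕ) (c : Fin m → ZMod 2) (c0 c' : ZMod 2)
    (f g : (Fin m → ZMod 2) → ZMod 2)
    (hf : ∀ x, f x = (∑ p ∈ Finset.univ.filter (fun p : Fin m × Fin m => p.1 < p.2),
        x p.1 * x p.2) + (∑ i, c i * x i) + c0)
    (hg : ∀ x, g x = f x + (∑ i, x i) + c') :
    IsTypeIIPair f g := by
  show genFun f ^ 2 + genFun g ^ 2 = 2 * ∏ k, (1 + MvPolynomial.X k ^ 2)
  apply MvPolynomial.map_injective (Int.castRingHom ℂ) Int.cast_injective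
  rw [map_add, map_pow, map_pow, map_mul, map_prod]
  have key : (MvPolynomial.map (Int.castRingHom ℂ) (genFun f))^2
      + (MvPolynomial.map (Int.castRingHom ℂ) (genFun g))^2
      = (MvPolynomial.map (Int.castRingHom ℂ) (genFun f)
          + C (I * 1) * MvPolynomial.map (Int.castRingHom ℂ) (genFun g))
      * (MvPolynomial.map (Int.castRingHom ℂ) (genFun f)
          + C (I * (-1)) * MvPolynomial.map (Int.castRingHom ℂ) (genFun g)) := by
    have h2 : (C I : MvPolynomial (Fin m) ℂ) * C I = -1 := by
      rw [← C_mul, Complex.I_mul_I]; simp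
    have hneg : (C (I * (-1)) : MvPolynomial (Fin m) ℂ) = -(C I) := by
      rw [show (I * (-1:ℂ)) = -I by ring, map_neg]
    rw [hneg, show (C (I * (1:ℂ)) : MvPolynomial (Fin m) ℂ) = C I by norm_num]
    linear_combination ((MvPolynomial.map (Int.castRingHom ℂ) (genFun g))^2) * h2
  rw [key, factor_form c c0 c' f g hf hg 1 (Or.inl rfl),
    factor_form c c0 c' f g hf hg (-1) (Or.inr rfl)]
  have huu : ((-1:ℂ)^(c0.val) * (1 + I * (1 * (-1:ℂ)^(c'.val)))) *
      ((-1:ℂ)^(c0.val) * (1 + I * ((-1) * (-1:ℂ)^(c'.val)))) = 2 := by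
    have expand : ((-1:ℂ)^(c0.val) * (1 + I * (1 * (-1:ℂ)^(c'.val)))) *
        ((-1:ℂ)^(c0.val) * (1 + I * ((-1) * (-1:ℂ)^(c'.val))))
        = ((-1:ℂ)^(c0.val) * (-1:ℂ)^(c0.val)) *
          (1 - (I * I) * ((-1:ℂ)^(c'.val) * (-1:ℂ)^(c'.val))) := by ring
    rw [expand, sq_neg_one_pow, Complex.I_mul_I, sq_neg_one_pow]
    norm_num
  calc (C ((-1:ℂ)^(c0.val) * (1 + I * (1 * (-1:ℂ)^(c'.val)))) *
        ∏ k, (1 + C ((-1:ℂ)^((c k).val) * (-(I * (1 * (-1:ℂ)^(c'.val))))) * X k)) *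
      (C ((-1:ℂ)^(c0.val) * (1 + I * ((-1) * (-1:ℂ)^(c'.val)))) *
        ∏ k, (1 + C ((-1:ℂ)^((c k).val) * (-(I * ((-1) * (-1:ℂ)^(c'.val))))) * X k))
      = C (((-1:ℂ)^(c0.val) * (1 + I * (1 * (-1:ℂ)^(c'.val)))) *
          ((-1:ℂ)^(c0.val) * (1 + I * ((-1) * (-1:ℂ)^(c'.val))))) *
        ∏ k, ((1 + C ((-1:ℂ)^((c k).val) * (-(I * (1 * (-1:ℂ)^(c'.val))))) * X k) *
          (1 + C ((-1:ℂ)^((c k).val) * (-(I * ((-1) * (-1:ℂ)^(c'.val))))) * X k)) := by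
        conv_rhs => rw [C_mul, Finset.prod_mul_distrib]
        exact mul_mul_mul_comm _ _ _ _
    _ = C (2:ℂ) * ∏ k, (1 + (X k : MvPolynomial (Fin m) ℂ)^2) := by
        rw [huu]
        congr 1
        refine Finset.prod_congr rfl fun k _ => ?_
        have ha : ((-1:ℂ)^((c k).val) * (-(I * (1 * (-1:ℂ)^(c'.val)))))^2 = -1 := by
          have expand : ((-1:ℂ)^((c k).val) * (-(I * (1 * (-1:ℂ)^(c'.val)))))^2
              = ((-1:ℂ)^((c k).val) * (-1:ℂ)^((c k).val)) *
                ((I * I) * ((-1:ℂ)^(c'.val) * (-1:ℂ)^(c'.val))) := by ring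
          rw [expand, sq_neg_one_pow, Complex.I_mul_I, sq_neg_one_pow]
          norm_num
        have hneg : (-1:ℂ)^((c k).val) * (-(I * ((-1) * (-1:ℂ)^(c'.val))))
            = -((-1:ℂ)^((c k).val) * (-(I * (1 * (-1:ℂ)^(c'.val))))) := by ring
        rw [hneg]
        exact per_factor _ ha k
    _ = _ := by
        have h2 : (MvPolynomial.map (Int.castRingHom ℂ)) (2 : MvPolynomial (Fin m) ℤ)
            = C (2:ℂ) := by
          rw [show (2 : MvPolynomial (Fin m) ℤ) = MvPolynomial.C 2 from rfl,
            MvPolynomial.map_C]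
          norm_num
        rw [h2]
        congr 1
        exact Finset.prod_congr rfl fun k _ => by
          rw [map_add, map_one, map_pow, MvPolynomial.map_X]
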